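/- Let d ≥ 1, let c_j > 0 for j = 1, …, d, and let η_1, …, η_d be normalized membership functions. Define μ(x) = ∏_{j=1}^d η_j(x_j/c_j) for x ∈ ℝ^d. Then: (i) μ is continuous and nonnegative on ℝ^d; (ii) μ(0) = 1; (iii) μ(x) = μ(y) whenever |x_j| = |y_j| for all j; (iv) μ(x) = 0 whenever |x_j| > c_j for some j; (v) for every x ∈ [0, c_1] × ⋯ × [0, c_d], the sum over all s ∈ {0, 1}^d of μ(x_1 − s_1·c_1, …, x_d − s_d·c_d) equals 1; and (vi) μ((1 + ε)·x) ≤ μ(x) for every x ∈ ℝ^d and every ε > 0. -/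

import Mathlib

/-- A normalized membership function: continuous, nonnegative, even, `η 0 = 1`,
vanishing for `|x| > 1`, monotonically nonincreasing on `[0,1]`, and satisfying
the Ruspini condition `η t + η (t - 1) = 1` on `[0,1]`. -/
def IsNormalizedMembershipFunction (η : ℝ → ℝ) : Prop :=
  Continuous η ∧ (∀ x, 0 ≤ η x) ∧ (∀ x, η (-x) = η x) ∧ η 0 = 1 ∧
    (∀ x, 1 < |x| → η x = 0) ∧ AntitoneOn η (Set.Icc 0 1) ∧
    (∀ t ∈ Set.Icc (0 : ℝ) 1, η t + η (t - 1) = 1)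

lemma nmf_antitone {η : ℝ → ℝ} (h : IsNormalizedMembershipFunction η) {a b : ℝ}
    (ha : 0 ≤ a) (hab : a ≤ b) : η b ≤ η a := by
  obtain ⟨-, hpos, -, -, hzero, hmono, -⟩ := h
  by_cases hb : b ≤ 1
  · exact hmono ⟨ha, hab.trans hb⟩ ⟨ha.trans hab, hb⟩ hab
  · rw [hzero b (by rw [abs_of_nonneg (ha.trans hab)]; linarith)]
    exact hpos a

lemma nmf_scale {η : ℝ → ℝ} (h : IsNormalizedMembershipFunction η) {k t : ℝ}
    (hk : 1 ≤ k) : η (k * t) ≤ η t := by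
  have heven := h.2.2.1
  rcases le_or_gt 0 t with ht | ht
  · exact nmf_antitone h ht (le_mul_of_one_le_left ht hk)
  · have h1 : k * t = -(k * -t) := by ring
    rw [h1, heven, ← heven t]
    exact nmf_antitone h (by linarith) (le_mul_of_one_le_left (by linarith) hk)

theorem product_is_strong_uniform_membership (d : ℕ) (hd : 1 ≤ d) (c : Fin d → ℝ)
    (hc : ∀ j, 0 < c j) (η : Fin d → ℝ → ℝ)
    (hη : ∀ j, IsNormalizedMembershipFunction (η j))
    (μ : (Fin d → ℝ) → ℝ) (hμ : μ = fun x => ∏ j, η j (x j / c j)) :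
    Continuous μ ∧ (∀ x, 0 ≤ μ x) ∧
    μ 0 = 1 ∧
    (∀ x y : Fin d → ℝ, (∀ j, |x j| = |y j|) → μ x = μ y) ∧
    (∀ x : Fin d → ℝ, (∃ j, c j < |x j|) → μ x = 0) ∧
    (∀ x : Fin d → ℝ, (∀ j, x j ∈ Set.Icc 0 (c j)) →
      ∑ s : Fin d → Bool, μ (fun j => x j - (if s j then c j else 0)) = 1) ∧
    (∀ x : Fin d → ℝ, ∀ ε : ℝ, 0 < ε → μ ((1 + ε) • x) ≤ μ x) := by
  subst hμ
  refine ⟨?_, ?_, ?_, ?_, ?_, ?_, ?_⟩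
  · exact continuous_finset_prod _ fun j _ =>
      (hη j).1.comp ((continuous_apply j : Continuous fun x : Fin d → ℝ => x j).div_const (c j))
  · exact fun x => Finset.prod_nonneg fun j _ => (hη j).2.1 _
  · exact Finset.prod_eq_one fun j _ => by
      simp [zero_div, (hη j).2.2.2.1]
  · intro x y h
    refine Finset.prod_congr rfl fun j _ => ?_
    rcases abs_eq_abs.mp (h j) with h' | h'
    · rw [h']
    · rw [h', neg_div, (hη j).2.2.1]
  · rintro x ⟨j, hj⟩
    refine Finset.prod_eq_zero (Finset.mem_univ j) ?_
    refine (hη j).2.2.2.2.1 _ ?_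
    rw [abs_div, abs_of_pos (hc j)]
    exact (one_lt_div (hc j)).mpr hj
  · intro x hx
    have key : ∀ j, (∑ b : Bool, η j ((x j - (if b then c j else 0)) / c j)) = 1 := by
      intro j
      have hcj := hc j
      have h1 : x j / c j ∈ Set.Icc (0 : ℝ) 1 :=
        ⟨div_nonneg (hx j).1 hcj.le, (div_le_one hcj).mpr (hx j).2⟩
      have hr := (hη j).2.2.2.2.2.2 _ h1
      simp only [Fintype.sum_bool, if_true, Bool.false_eq_true, if_false, sub_zero]
      rw [sub_div, div_self hcj.ne']
      linarith
    have hswap := Finset.prod_univ_sum (fun _ : Fin d => (Finset.univ : Finset Bool))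
      (fun j b => η j ((x j - if b then c j else 0) / c j))
    rw [Fintype.piFinset_univ] at hswap
    calc ∑ s : Fin d → Bool, ∏ j, η j ((x j - if s j then c j else 0) / c j)
        = ∏ j, ∑ b : Bool, η j ((x j - if b then c j else 0) / c j) := hswap.symm
      _ = 1 := Finset.prod_eq_one fun j _ => key j
  · intro x ε hε
    refine Finset.prod_le_prod (fun j _ => (hη j).2.1 _) fun j _ => ?_
    have : (1 + ε) • x j / c j = (1 + ε) * (x j / c j) := by
      simp [smul_eq_mul]; ring
    calc η j (((1 + ε) • x) j / c j) = η j ((1 + ε) * (x j / c j)) := by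
          simp only [Pi.smul_apply, smul_eq_mul]; ring_nf
      _ ≤ η j (x j / c j) := nmf_scale (hη j) (by linarith)
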